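/- Let C, V > 0, δ₁ = 1.545, and n ≥ 9δ₁²V/C². Then the function k ↦ (k/n)·P̂_c(k), where P̂_c(k) = 1 if (nC−k)/√(nV) ≥ δ₁, P̂_c(k) = ((nC−k)/√(nV))/(2δ₁) + 1/2 if −δ₁ ≤ (nC−k)/√(nV) < δ₁, and P̂_c(k) = 0 otherwise, is maximized over k > 0 at k* = nC − δ₁√(nV). -/

import Mathlib

theorem stmt8 (C V n : ℝ) (hC : 0 < C) (hV : 0 < V)
    (δ₁ : ℝ) (hδ : δ₁ = 1.545)
    (hn : 9 * δ₁ ^ 2 * V / C ^ 2 ≤ n)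
    (P : ℝ → ℝ)
    (hP : ∀ k, P k =
      if δ₁ ≤ (n * C - k) / Real.sqrt (n * V) then 1
      else if -δ₁ ≤ (n * C - k) / Real.sqrt (n * V) then
        ((n * C - k) / Real.sqrt (n * V)) / (2 * δ₁) + 1 / 2
      else 0)
    (kstar : ℝ) (hk : kstar = n * C - δ₁ * Real.sqrt (n * V)) :
    ∀ k ∈ Set.Ioi (0 : ℝ), (k / n) * P k ≤ (kstar / n) * P kstar := by
  subst hδ
  intro k hk0
  simp only [Set.mem_Ioi] at hk0
  have hn0 : 0 < n := lt_of_lt_of_le (by positivity) hn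
  set s := Real.sqrt (n * V) with hs
  have hs0 : 0 < s := Real.sqrt_pos.mpr (by positivity)
  have hs2 : s ^ 2 = n * V := Real.sq_sqrt (by positivity)
  have hnC2 : 9 * (1.545:ℝ) ^ 2 * V ≤ n * C ^ 2 := by
    have := (div_le_iff₀ (by positivity : (0:ℝ) < C ^ 2)).mp hn
    linarith [this]
  have hnC : 3 * (1.545:ℝ) * s ≤ n * C := by
    nlinarith [sq_nonneg (n * C - 3 * 1.545 * s), sq_nonneg (n * C + 3 * 1.545 * s),
      mul_pos hn0 hC, mul_pos (mul_pos (by norm_num : (0:ℝ) < 3 * 1.545) hs0) hn0]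
  have hPstar : P kstar = 1 := by
    rw [hP kstar, if_pos]
    rw [hk]
    have : n * C - (n * C - 1.545 * s) = 1.545 * s := by ring
    rw [this, mul_div_assoc, div_self hs0.ne', mul_one]
  rw [hPstar, hP k, mul_one, hk]
  split_ifs with h1 h2
  · have : 1.545 * s ≤ n * C - k := (le_div_iff₀ hs0).mp h1
    rw [mul_one]
    gcongr
    linarith
  · have hlt : n * C - k < 1.545 * s := (div_lt_iff₀ hs0).mp (not_le.mp h1)
    have hge : -1.545 * s ≤ n * C - k := (le_div_iff₀ hs0).mp h2
    have e : (n * C - k) / s / (2 * 1.545) + 1 / 2 = ((n * C - k) + 1.545 * s) / (2 * 1.545 * s) := by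
      field_simp
    rw [e, div_mul_div_comm]
    rw [div_le_div_iff₀ (by positivity) hn0]
    nlinarith [mul_nonneg (by linarith : (0:ℝ) ≤ 1.545 * s - (n * C - k))
      (by linarith : (0:ℝ) ≤ n * C - 2 * (1.545 * s) - (n * C - k)), hk0.le, hs0.le]
  · rw [mul_zero]
    exact div_nonneg (by linarith) hn0.le
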